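/- arXiv:1602.02845 — 3 statements merged into one kernel-verified Lean document; each statement's English description precedes it below -/
import Mathlib

section
/- For any symmetric positive definite n×n real matrix X, the trace of its inverse is at least the trace of the inverse of its diagonal part: Tr(X⁻¹) ≥ ∑ᵢ 1/Xᵢᵢ. -/
open Matrix

lemma diag_inv_pos_aux {n : ℕ} (X : Matrix (Fin n) (Fin n) ℝ)
    (hX : X.PosDef) (i : Fin n) : 0 < X i i := by
  have h := hX.dotProduct_mulVec_pos (x := Pi.single i 1) (by simp [Function.ne_iff])
  simpa [dotProduct, mulVec, Pi.single_apply, Finset.sum_ite_eq'] using h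

/-- For any symmetric positive definite `n × n` real matrix `X`,
`Tr(X⁻¹) ≥ ∑ i, 1 / X i i`. -/
theorem trace_inv_ge_trace_diag_inv {n : ℕ} (X : Matrix (Fin n) (Fin n) ℝ)
    (hX : X.PosDef) :
    ∑ i, 1 / X i i ≤ (X⁻¹).trace := by
  have hB : (X⁻¹).PosDef := hX.inv
  rw [Matrix.trace]
  apply Finset.sum_le_sum
  intro i _
  set B := X⁻¹ with hBdef
  have hBii : 0 < B i i := diag_inv_pos_aux X⁻¹ hB i
  have hXii : 0 < X i i := diag_inv_pos_aux X hX i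
  -- quadratic form at v = e_i - (1/B i i) • (B *ᵥ e_i)
  set e : Fin n → ℝ := Pi.single i 1 with he
  set c : ℝ := 1 / B i i with hc
  set v : Fin n → ℝ := e - c • (B *ᵥ e) with hv
  have hq : 0 ≤ dotProduct (star v) (X *ᵥ v) := hX.posSemidef.dotProduct_mulVec_nonneg v
  have hdet : IsUnit X.det := isUnit_iff_ne_zero.2 hX.det_pos.ne'
  have hXB : X * B = 1 := X.mul_nonsing_inv hdet
  have hBX : B * X = 1 := X.nonsing_inv_mul hdet
  have hsym : Bᵀ = B := by simpa using hB.1.eq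
  have hXBe : X *ᵥ (B *ᵥ e) = e := by
    rw [mulVec_mulVec, hXB, one_mulVec]
  have hXv : X *ᵥ v = X *ᵥ e - c • e := by
    rw [hv, mulVec_sub, mulVec_smul, hXBe]
  have hee : dotProduct e e = 1 := by simp [he, single_dotProduct]
  have heXe : dotProduct e (X *ᵥ e) = X i i := by
    simp [he, single_dotProduct, mulVec_single]
  have hBee : dotProduct (B *ᵥ e) e = B i i := by
    rw [dotProduct_comm]
    simp [he, single_dotProduct, mulVec_single]
  have hBeXe : dotProduct (B *ᵥ e) (X *ᵥ e) = 1 := by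
    rw [dotProduct_comm, dotProduct_mulVec]
    have : (X *ᵥ e) ᵥ* B = B *ᵥ (X *ᵥ e) := by
      conv_rhs => rw [← hsym]
      exact (mulVec_transpose B _).symm
    rw [this, mulVec_mulVec, hBX, one_mulVec, hee]
  have hqval : dotProduct (star v) (X *ᵥ v)
      = X i i - 2 * c + c ^ 2 * B i i := by
    have hsv : star v = v := by simp [hv]
    rw [hsv, hXv, hv, sub_dotProduct, dotProduct_sub, dotProduct_sub,
      smul_dotProduct, smul_dotProduct, dotProduct_smul, dotProduct_smul,
      hee, heXe, hBee, hBeXe]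
    simp only [smul_eq_mul]
    ring
  rw [hqval] at hq
  have key : (1 / B i i) ^ 2 * B i i = 1 / B i i := by
    field_simp
  have h1 : 1 / B i i ≤ X i i := by
    rw [hc, key] at hq; linarith
  show 1 / X i i ≤ B.diag i
  rw [Matrix.diag, div_le_iff₀ hXii]
  nlinarith [mul_le_mul_of_nonneg_right h1 hBii.le, one_div_mul_cancel hBii.ne']
end

section
/- The function mapping a symmetric positive definite matrix H to Tr(H⁻¹) is convex: for symmetric positive definite matrices A, B and t ∈ [0,1], Tr((tA + (1−t)B)⁻¹) ≤ t·Tr(A⁻¹) + (1−t)·Tr(B⁻¹). -/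
open Matrix

lemma psd_smul {d : ℕ} {M : Matrix (Fin d) (Fin d) ℝ} (hM : M.PosSemidef)
    {c : ℝ} (hc : 0 ≤ c) : (c • M).PosSemidef := by
  refine ⟨?_, fun x => ?_⟩
  · show (c • M)ᴴ = c • M
    rw [conjTranspose_smul, hM.1.eq]
    simp
  · exact (hM.smul hc).2 x

lemma psd_trace_nonneg {d : ℕ} {M : Matrix (Fin d) (Fin d) ℝ} (hM : M.PosSemidef) :
    0 ≤ M.trace := by
  rw [Matrix.trace]
  apply Finset.sum_nonneg
  intro i _
  exact hM.diag_nonneg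

/-- Key variational inequality: for PD `H` and Hermitian `X`,
`2 Tr X − Tr (X H X) ≤ Tr H⁻¹`. -/
lemma key_ineq {d : ℕ} {H : Matrix (Fin d) (Fin d) ℝ} (hH : H.PosDef)
    (X : Matrix (Fin d) (Fin d) ℝ) (hX : X.IsHermitian) :
    2 * X.trace - (X * H * X).trace ≤ (H⁻¹).trace := by
  have hdet : IsUnit H.det := isUnit_iff_ne_zero.mpr hH.det_pos.ne'
  set K := H⁻¹ with hK
  have hKH : K * H = 1 := Matrix.nonsing_inv_mul H hdet
  have hHK : H * K = 1 := Matrix.mul_nonsing_inv H hdet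
  have hKherm : K.IsHermitian := hH.isHermitian.inv
  have herm : (X - K).IsHermitian := hX.sub hKherm
  have hpsd : ((X - K) * H * (X - K)ᴴ).PosSemidef :=
    hH.posSemidef.mul_mul_conjTranspose_same (X - K)
  rw [herm.eq] at hpsd
  have hexp : (X - K) * H * (X - K) = X * H * X - X * (H * K) - K * H * X + K * (H * K) := by
    noncomm_ring
  have htr : ((X - K) * H * (X - K)).trace
      = (X * H * X).trace - 2 * X.trace + K.trace := by
    rw [hexp, hHK, hKH, mul_one, mul_one, one_mul]
    simp [Matrix.trace_add, Matrix.trace_sub]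
    ring
  have := psd_trace_nonneg hpsd
  rw [htr] at this
  linarith

/-- The map `H ↦ Tr(H⁻¹)` is convex on symmetric positive definite matrices:
for positive definite `A, B` and `t ∈ [0, 1]`,
`Tr((tA + (1−t)B)⁻¹) ≤ t Tr(A⁻¹) + (1−t) Tr(B⁻¹)`. -/
theorem trace_inv_convex {d : ℕ} (A B : Matrix (Fin d) (Fin d) ℝ)
    (hA : A.PosDef) (hB : B.PosDef) (t : ℝ) (ht0 : 0 ≤ t) (ht1 : t ≤ 1) :
    ((t • A + (1 - t) • B)⁻¹).trace ≤ t * (A⁻¹).trace + (1 - t) * (B⁻¹).trace := by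
  set C := t • A + (1 - t) • B with hC
  have hCpd : C.PosDef := by
    rcases eq_or_lt_of_le ht0 with h0 | h0
    · have : C = B := by rw [hC, ← h0]; simp
      rw [this]; exact hB
    · have h1 : (t • A).PosDef :=
        ⟨by
          show (t • A)ᴴ = t • A
          rw [conjTranspose_smul, hA.isHermitian.eq]
          simp, fun x hx => by
          exact (hA.smul h0).2 hx⟩
      exact h1.add_posSemidef (psd_smul hB.posSemidef (by linarith))
  set X := C⁻¹ with hX
  have hXherm : X.IsHermitian := hCpd.isHermitian.inv
  have hdet : IsUnit C.det := isUnit_iff_ne_zero.mpr hCpd.det_pos.ne'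
  have hXC : X * C = 1 := Matrix.nonsing_inv_mul C hdet
  have hCX : C * X = 1 := Matrix.mul_nonsing_inv C hdet
  have hXCX : (X * C * X).trace = X.trace := by rw [hXC, one_mul]
  have hsplit : (X * C * X).trace = t * (X * A * X).trace + (1 - t) * (X * B * X).trace := by
    rw [hC]
    rw [Matrix.mul_add, Matrix.add_mul, Matrix.trace_add]
    rw [Matrix.mul_smul, Matrix.smul_mul, Matrix.trace_smul,
      Matrix.mul_smul, Matrix.smul_mul, Matrix.trace_smul]
    simp [smul_eq_mul]
  have hA' := key_ineq hA X hXherm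
  have hB' := key_ineq hB X hXherm
  have hcomb : t * (2 * X.trace - (X * A * X).trace) + (1 - t) * (2 * X.trace - (X * B * X).trace)
      ≤ t * (A⁻¹).trace + (1 - t) * (B⁻¹).trace := by
    apply add_le_add
    · exact mul_le_mul_of_nonneg_left hA' ht0
    · exact mul_le_mul_of_nonneg_left hB' (by linarith)
  have hL : t * (2 * X.trace - (X * A * X).trace) + (1 - t) * (2 * X.trace - (X * B * X).trace)
      = 2 * X.trace - (X * C * X).trace := by
    rw [hsplit]; ring
  rw [hL, hXCX] at hcomb
  calc (C⁻¹).trace = 2 * X.trace - X.trace := by rw [← hX]; ring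
    _ ≤ _ := hcomb
end

section
/- (Chi-squared upper tail, Laurent–Massart) If Z is a chi-squared random variable with d degrees of freedom, then for every x ≥ 0, P(Z − d ≥ 2√(dx) + 2x) ≤ exp(−x). -/
open MeasureTheory ProbabilityTheory Real
open scoped NNReal ENNReal

lemma aux_log_le (w : ℝ) (hw : 1 ≤ w) : Real.log w ≤ (w - w⁻¹) / 2 := by
  set f : ℝ → ℝ := fun w => (w - w⁻¹) / 2 - Real.log w with hf
  have hd : ∀ y : ℝ, 0 < y → HasDerivAt f ((1 + (y^2)⁻¹)/2 - y⁻¹) y := by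
    intro y hy
    have h1 : HasDerivAt (fun w : ℝ => (w - w⁻¹)/2) ((1 - -(y^2)⁻¹)/2) y :=
      ((hasDerivAt_id y).sub (hasDerivAt_inv hy.ne')).div_const 2
    have h2 := Real.hasDerivAt_log hy.ne'
    convert h1.sub h2 using 1
    · rfl
    · rfl
    · rfl
    ring
  have hmono : MonotoneOn f (Set.Ici 1) := by
    apply monotoneOn_of_deriv_nonneg (convex_Ici 1)
    · intro y hy
      exact (hd y (lt_of_lt_of_le zero_lt_one hy)).continuousAt.continuousWithinAt
    · intro y hy
      rw [interior_Ici] at hy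
      exact (hd y (lt_trans zero_lt_one hy)).differentiableAt.differentiableWithinAt
    · intro y hy
      rw [interior_Ici] at hy
      have hy0 : (0:ℝ) < y := lt_trans zero_lt_one hy
      rw [(hd y hy0).deriv]
      have h2 : (y^2)⁻¹ = (y⁻¹)^2 := by rw [inv_pow]
      rw [h2]
      nlinarith [sq_nonneg (1 - y⁻¹)]
  have h := hmono Set.self_mem_Ici hw hw
  simp only [hf, Real.log_one] at h
  norm_num at h
  linarith

lemma gaussian_sq_exp_integrable {t : ℝ} (ht : t < 1/2) :
    Integrable (fun y : ℝ => Real.exp (t * y ^ 2)) (gaussianReal 0 1) := by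
  rw [gaussianReal_of_var_ne_zero 0 one_ne_zero,
    integrable_withDensity_iff (measurable_gaussianPDF 0 1)
      (ae_of_all _ fun x => ENNReal.ofReal_lt_top)]
  have heq : (fun x : ℝ => Real.exp (t * x ^ 2) * (gaussianPDF 0 1 x).toReal)
      = fun x => (Real.sqrt (2 * π))⁻¹ * Real.exp (-(1/2 - t) * x ^ 2) := by
    ext x
    rw [gaussianPDF, ENNReal.toReal_ofReal (gaussianPDFReal_nonneg 0 1 x), gaussianPDFReal]
    simp only [NNReal.coe_one, mul_one, sub_zero]
    rw [mul_comm, mul_assoc, ← Real.exp_add]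
    congr 1
    ring
  rw [heq]
  exact (integrable_exp_neg_mul_sq (by linarith)).const_mul _

lemma gaussian_sq_exp_integral {t : ℝ} (ht : t < 1/2) :
    ∫ y, Real.exp (t * y ^ 2) ∂(gaussianReal 0 1) = (Real.sqrt (1 - 2*t))⁻¹ := by
  rw [gaussianReal_of_var_ne_zero 0 one_ne_zero, gaussianPDF_def]
  rw [show (fun x => ENNReal.ofReal (gaussianPDFReal 0 1 x))
      = (fun x => ((Real.toNNReal (gaussianPDFReal 0 1 x) : ℝ≥0) : ℝ≥0∞)) from rfl]
  rw [integral_withDensity_eq_integral_smul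
    ((measurable_gaussianPDFReal 0 1).real_toNNReal) _]
  have heq : (fun x : ℝ => Real.toNNReal (gaussianPDFReal 0 1 x) • Real.exp (t * x ^ 2))
      = fun x => (Real.sqrt (2 * π))⁻¹ * Real.exp (-(1/2 - t) * x ^ 2) := by
    ext x
    rw [NNReal.smul_def, smul_eq_mul, Real.coe_toNNReal _ (gaussianPDFReal_nonneg 0 1 x),
      gaussianPDFReal]
    simp only [NNReal.coe_one, mul_one, sub_zero]
    rw [mul_assoc, ← Real.exp_add]
    congr 1
    ring
  rw [heq, integral_const_mul, integral_gaussian]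
  have hb : (0:ℝ) < 1/2 - t := by linarith
  rw [← Real.sqrt_inv, ← Real.sqrt_mul (by positivity), ← Real.sqrt_inv]
  congr 1
  have hπ := Real.pi_ne_zero
  have h1 : (1:ℝ) - 2*t ≠ 0 := by linarith
  have h2 : (1:ℝ)/2 - t ≠ 0 := by linarith
  field_simp

/-- (Laurent–Massart) chi-squared upper tail bound: if `Z = ∑_{i<d} Gᵢ²` where the `Gᵢ`
are i.i.d. standard Gaussian random variables, then for every `x ≥ 0`,
`P(Z − d ≥ 2√(dx) + 2x) ≤ exp(−x)`. -/
theorem chi_squared_upper_tail {Ω : Type*} [MeasurableSpace Ω]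
    (μ : Measure Ω) [IsProbabilityMeasure μ] (d : ℕ)
    (G : Fin d → Ω → ℝ) (hmeas : ∀ i, Measurable (G i))
    (hindep : iIndepFun G μ)
    (hgauss : ∀ i, μ.map (G i) = gaussianReal 0 1)
    (x : ℝ) (hx : 0 ≤ x) :
    μ {ω | 2 * Real.sqrt (d * x) + 2 * x ≤ (∑ i, (G i ω) ^ 2) - d} ≤
      ENNReal.ofReal (Real.exp (-x)) := by
  by_cases hd : d = 0
  · subst hd
    simp only [Nat.cast_zero, zero_mul, Real.sqrt_zero, mul_zero, zero_add,
      Finset.univ_eq_empty, Finset.sum_empty, sub_zero]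
    rcases hx.eq_or_lt with hx0 | hx0
    · subst hx0
      simp only [mul_zero, neg_zero, Real.exp_zero, ENNReal.ofReal_one]
      simpa using measure_mono (Set.subset_univ _)
    · have : {ω : Ω | 2 * x ≤ 0} = ∅ := by
        ext ω; simp only [Set.mem_setOf_eq, Set.mem_empty_iff_false, iff_false]; linarith
      rw [this, measure_empty]
      exact zero_le
  -- main case d ≥ 1
  have hdpos : (0:ℝ) < (d:ℝ) := by
    exact_mod_cast Nat.pos_of_ne_zero hd
  set D : ℝ := (d:ℝ) with hD_def
  set s : ℝ := Real.sqrt (x / D) with hs_def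
  have hs : 0 ≤ s := Real.sqrt_nonneg _
  have hxs : x = D * s ^ 2 := by
    rw [hs_def, Real.sq_sqrt (div_nonneg hx hdpos.le)]
    field_simp
  have h1 : (0:ℝ) < 1 + 2*s := by linarith
  set t : ℝ := s / (1 + 2*s) with ht_def
  have ht0 : 0 ≤ t := div_nonneg hs h1.le
  have ht : t < 1/2 := by rw [ht_def, div_lt_iff₀ h1]; linarith
  have h1t : 1 - 2*t = (1 + 2*s)⁻¹ := by rw [ht_def]; field_simp; ring
  have hsqrtDx : Real.sqrt (D * x) = D * s := by
    rw [hxs, show D * (D * s^2) = (D*s)^2 by ring, Real.sqrt_sq (by positivity)]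
  set ε : ℝ := D + 2*(D*s) + 2*x with hε_def
  set X : Fin d → Ω → ℝ := fun i => (fun y : ℝ => y^2) ∘ G i with hX_def
  have hXmeas : ∀ i, Measurable (X i) := fun i => (measurable_id.pow_const 2).comp (hmeas i)
  have hX_indep : iIndepFun X μ :=
    hindep.comp (fun _ (y : ℝ) => y^2) (fun _ => measurable_id.pow_const 2)
  have hmy : Measurable fun y : ℝ => Real.exp (t * y^2) :=
    Real.measurable_exp.comp ((measurable_id.pow_const 2).const_mul t)
  have hint : ∀ i, Integrable (fun ω => Real.exp (t * X i ω)) μ := by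
    intro i
    have h1' := gaussian_sq_exp_integrable ht
    rw [← hgauss i] at h1'
    exact (integrable_map_measure
      hmy.aestronglyMeasurable (hmeas i).aemeasurable).mp h1'
  have hmgf : ∀ i, mgf (X i) μ t = (Real.sqrt (1 - 2*t))⁻¹ := by
    intro i
    calc mgf (X i) μ t = ∫ ω, Real.exp (t * (G i ω)^2) ∂μ := rfl
      _ = ∫ y, Real.exp (t * y^2) ∂(μ.map (G i)) :=
          (integral_map (hmeas i).aemeasurable
            hmy.aestronglyMeasurable).symm
      _ = (Real.sqrt (1 - 2*t))⁻¹ := by rw [hgauss i]; exact gaussian_sq_exp_integral ht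
  have hSint : Integrable (fun ω => Real.exp (t * (∑ i, X i) ω)) μ :=
    hX_indep.integrable_exp_mul_sum hXmeas (fun i _ => hint i)
  have hmgfS : mgf (∑ i, X i) μ t = ((Real.sqrt (1 - 2*t))⁻¹)^d := by
    rw [hX_indep.mgf_sum hXmeas]
    simp [hmgf]
  have hcher := measure_ge_le_exp_mul_mgf (X := ∑ i, X i) (μ := μ) ε ht0 hSint
  rw [hmgfS] at hcher
  have hset : {ω | 2 * Real.sqrt (D * x) + 2 * x ≤ (∑ i, (G i ω) ^ 2) - D}
      = {ω | ε ≤ (∑ i, X i) ω} := by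
    ext ω
    simp only [Set.mem_setOf_eq, Finset.sum_apply, hsqrtDx, hε_def, hX_def,
      Function.comp_apply]
    constructor <;> intro h <;> linarith
  have hfinal : Real.exp (-t * ε) * ((Real.sqrt (1 - 2*t))⁻¹)^d ≤ Real.exp (-x) := by
    have hw : (1:ℝ) ≤ 1 + 2*s := by linarith
    have hlog := aux_log_le (1 + 2*s) hw
    have hM : (Real.sqrt (1 - 2*t))⁻¹ = Real.sqrt (1 + 2*s) := by
      rw [h1t, Real.sqrt_inv, inv_inv]
    rw [hM, ← Real.exp_log (Real.sqrt_pos.mpr h1), ← Real.exp_nat_mul, ← Real.exp_add,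
      Real.exp_le_exp, Real.log_sqrt h1.le]
    have key : -t * ε + D * (((1 + 2*s) - (1 + 2*s)⁻¹)/2) / 2 = -x := by
      rw [hε_def, ht_def, hxs]
      field_simp
      ring
    have hDnn : (0:ℝ) ≤ D / 2 := by positivity
    nlinarith [mul_le_mul_of_nonneg_left hlog hDnn]
  calc μ {ω | 2 * Real.sqrt (D * x) + 2 * x ≤ (∑ i, (G i ω) ^ 2) - D}
      = μ {ω | ε ≤ (∑ i, X i) ω} := by rw [hset]
    _ ≤ ENNReal.ofReal (Real.exp (-t * ε) * ((Real.sqrt (1 - 2*t))⁻¹)^d) :=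
        (ENNReal.le_ofReal_iff_toReal_le (measure_ne_top μ _) (by positivity)).mpr hcher
    _ ≤ ENNReal.ofReal (Real.exp (-x)) := ENNReal.ofReal_le_ofReal hfinal
end
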